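/- Let p ≥ 1, β > 0, A ∈ ℝ, c ∈ ℝ^p, and let P : ℝ × ℝ^p → ℝ. Suppose u : ℝ × ℝ^p → ℝ is differentiable in t and twice differentiable in x and satisfies, for all (t,x), (1/(2β))·Δu(t,x) + ∂ₜu(t,x) − ( (1/2)·‖c − ∇u(t,x)‖² + P(t,x) ) + A = 0. Define v(t,x) = exp(−β·u(t,x)). Then for all (t,x): ∂ₜv(t,x) + exp(−β·⟨c,x⟩) · ( (1/(2β)) · Δ_x( y ↦ exp(β·⟨c,y⟩)·v(t,y) )(x) + β·(P(t,x) − A)·exp(β·⟨c,x⟩)·v(t,x) ) = 0. -/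

import Mathlib

open scoped RealInnerProductSpace

/-- The spatial Laplacian of `f : ℝ^p → ℝ`: the sum of the second derivatives in the
directions of the standard orthonormal basis (the trace of the Hessian). -/
noncomputable def laplacian {p : ℕ} (f : EuclideanSpace ℝ (Fin p) → ℝ)
    (x : EuclideanSpace ℝ (Fin p)) : ℝ :=
  ∑ i : Fin p,
    fderiv ℝ (fun y => fderiv ℝ f y (EuclideanSpace.single i 1)) x (EuclideanSpace.single i 1)

/-- if `u` solves the viscous Hamilton–Jacobi equation, then
`v = exp(−βu)` solves the twisted Schrödinger equation. -/
theorem stmt3 (p : ℕ) (hp : 1 ≤ p) (β : ℝ) (hβ : 0 < β) (A : ℝ)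
    (c : EuclideanSpace ℝ (Fin p)) (P : ℝ → EuclideanSpace ℝ (Fin p) → ℝ)
    (u : ℝ → EuclideanSpace ℝ (Fin p) → ℝ)
    (hut : ∀ x, Differentiable ℝ fun t => u t x)
    (hux : ∀ t, Differentiable ℝ (u t))
    (hux2 : ∀ t, Differentiable ℝ fun x => fderiv ℝ (u t) x)
    (hpde : ∀ t x, (1 / (2 * β)) * laplacian (u t) x + deriv (fun s => u s x) t -
      ((1 / 2) * ‖c - gradient (u t) x‖ ^ 2 + P t x) + A = 0)
    (v : ℝ → EuclideanSpace ℝ (Fin p) → ℝ)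
    (hv : ∀ t x, v t x = Real.exp (-β * u t x)) :
    ∀ t x, deriv (fun s => v s x) t + Real.exp (-β * ⟪c, x⟫) *
      ((1 / (2 * β)) * laplacian (fun y => Real.exp (β * ⟪c, y⟫) * v t y) x +
        β * (P t x - A) * Real.exp (β * ⟪c, x⟫) * v t x) = 0 := by
  intro t x
  -- time derivative
  have hT : deriv (fun s => v s x) t
      = Real.exp (-β * u t x) * (-β * deriv (fun s => u s x) t) := by
    have h1 : HasDerivAt (fun s => u s x) (deriv (fun s => u s x) t) t :=
      ((hut x) t).hasDerivAt
    have h2 := ((h1.const_mul (-β)).exp)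
    have he : (fun s => v s x) = fun s => Real.exp (-β * u s x) := funext fun s => hv s x
    rw [he]
    exact h2.deriv
  set g : EuclideanSpace ℝ (Fin p) → ℝ := fun y => β * ⟪c, y⟫ + -β * (u t) y with hgdef
  set G : EuclideanSpace ℝ (Fin p) → (EuclideanSpace ℝ (Fin p) →L[ℝ] ℝ) :=
    fun y => β • (innerSL ℝ c) + (-β) • fderiv ℝ (u t) y with hGdef
  have hg : ∀ y, HasFDerivAt g (G y) y := by
    intro y
    have h1 : HasFDerivAt (fun y : EuclideanSpace ℝ (Fin p) => ⟪c, y⟫) (innerSL ℝ c) y :=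
      (innerSL ℝ c).hasFDerivAt
    exact (h1.const_mul β).add (((hux t y).hasFDerivAt).const_mul (-β))
  have hf : ∀ y, HasFDerivAt (fun y => Real.exp (g y)) (Real.exp (g y) • G y) y :=
    fun y => (hg y).exp
  have hfeq : (fun y => Real.exp (β * ⟪c, y⟫) * v t y) = fun y => Real.exp (g y) := by
    funext y
    rw [hv, ← Real.exp_add]
  -- gradient inner identity
  have hgrad : ∀ h, ⟪gradient (u t) x, h⟫ = fderiv ℝ (u t) x h := by
    intro h
    rw [← InnerProductSpace.toDual_apply_apply, gradient, LinearIsometryEquiv.apply_symm_apply]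
  -- per-direction second derivative
  have key : ∀ i : Fin p,
      fderiv ℝ (fun y => fderiv ℝ (fun y => Real.exp (g y)) y (EuclideanSpace.single i 1)) x
        (EuclideanSpace.single i 1)
      = Real.exp (g x) * ((G x (EuclideanSpace.single i 1)) ^ 2
          + (-β) * fderiv ℝ (fun y => fderiv ℝ (u t) y (EuclideanSpace.single i 1)) x
              (EuclideanSpace.single i 1)) := by
    intro i
    set e := EuclideanSpace.single i (1:ℝ) with he
    have h2i : HasFDerivAt (fun y => fderiv ℝ (u t) y e)
        ((ContinuousLinearMap.apply ℝ ℝ e).comp (fderiv ℝ (fderiv ℝ (u t)) x)) x :=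
      (ContinuousLinearMap.apply ℝ ℝ e).hasFDerivAt.comp x ((hux2 t x).hasFDerivAt)
    have haff : HasFDerivAt (fun y => β * ⟪c, e⟫ + (-β) * fderiv ℝ (u t) y e)
        ((-β) • ((ContinuousLinearMap.apply ℝ ℝ e).comp (fderiv ℝ (fderiv ℝ (u t)) x))) x := by
      simpa using (h2i.const_mul (-β)).const_add (β * ⟪c, e⟫)
    have hprod : HasFDerivAt (fun y => Real.exp (g y) * (β * ⟪c, e⟫ + (-β) * fderiv ℝ (u t) y e)) _ x :=
      (hf x).mul haff
    have hinnerfun : (fun y => fderiv ℝ (fun y => Real.exp (g y)) y e)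
        = fun y => Real.exp (g y) * (β * ⟪c, e⟫ + (-β) * fderiv ℝ (u t) y e) := by
      funext y
      rw [(hf y).fderiv]
      simp [hGdef, ContinuousLinearMap.smul_apply, mul_add]
    rw [hinnerfun, hprod.fderiv]
    have hDii : fderiv ℝ (fun y => fderiv ℝ (u t) y e) x e
        = (fderiv ℝ (fderiv ℝ (u t)) x e) e := by
      rw [h2i.fderiv]; rfl
    have hGxe : G x e = β * ⟪c, e⟫ + (-β) * fderiv ℝ (u t) x e := by
      simp [hGdef]
    simp only [ContinuousLinearMap.add_apply, ContinuousLinearMap.smul_apply,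
      ContinuousLinearMap.comp_apply, ContinuousLinearMap.apply_apply, smul_eq_mul]
    rw [hDii, hGxe]
    ring
  have hGe : ∀ i : Fin p, G x (EuclideanSpace.single i 1)
      = β * ⟪c - gradient (u t) x, EuclideanSpace.single i 1⟫ := by
    intro i
    have := hgrad (EuclideanSpace.single i 1)
    simp only [hGdef, ContinuousLinearMap.add_apply, ContinuousLinearMap.smul_apply,
      innerSL_apply_apply, smul_eq_mul, inner_sub_left, ← this]
    ring
  have hnorm : ∑ i : Fin p, ⟪c - gradient (u t) x, EuclideanSpace.single i 1⟫ ^ 2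
      = ‖c - gradient (u t) x‖ ^ 2 := by
    set z := c - gradient (u t) x with hz
    have h1 : ∀ i : Fin p, ⟪z, EuclideanSpace.single i 1⟫ = z i := by
      intro i
      simp [EuclideanSpace.inner_single_right]
    rw [← real_inner_self_eq_norm_sq]
    simp only [h1]
    rw [PiLp.inner_apply]
    simp [pow_two]
  have hlap : laplacian (fun y => Real.exp (β * ⟪c, y⟫) * v t y) x
      = Real.exp (g x) * (β ^ 2 * ‖c - gradient (u t) x‖ ^ 2 + (-β) * laplacian (u t) x) := by
    rw [hfeq]
    show (∑ i : Fin p, fderiv ℝ (fun y => fderiv ℝ (fun y => Real.exp (g y)) y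
      (EuclideanSpace.single i 1)) x (EuclideanSpace.single i 1)) = _
    rw [Finset.sum_congr rfl (fun i _ => key i), ← Finset.mul_sum, Finset.sum_add_distrib,
      ← Finset.mul_sum]
    have : ∑ i : Fin p, (G x (EuclideanSpace.single i 1)) ^ 2
        = β ^ 2 * ‖c - gradient (u t) x‖ ^ 2 := by
      simp only [hGe, mul_pow]
      rw [← Finset.mul_sum, hnorm]
    rw [this]
    rfl
  have hE1 : Real.exp (-β * ⟪c, x⟫) * Real.exp (g x) = Real.exp (-β * u t x) := by
    rw [← Real.exp_add]
    congr 1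
    simp only [hgdef]
    ring
  have hE2 : Real.exp (-β * ⟪c, x⟫) * Real.exp (β * ⟪c, x⟫) = 1 := by
    rw [← Real.exp_add]
    simp
  have hpde' := hpde t x
  have hL : laplacian (u t) x = β * ‖c - gradient (u t) x‖ ^ 2 + 2 * β * P t x - 2 * β * A
      - 2 * β * deriv (fun s => u s x) t := by
    field_simp at hpde'
    linarith
  rw [hT, hlap, hv t x, hL]
  set E0 := Real.exp (-β * u t x) with hE0
  set Eg := Real.exp (g x) with hEg
  set Ec := Real.exp (-β * ⟪c, x⟫) with hEc
  set Ep := Real.exp (β * ⟪c, x⟫) with hEp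
  field_simp
  linear_combination 2 * β * (deriv (fun s => u s x) t - P t x + A) * hE1
    + 2 * β * E0 * (P t x - A) * hE2
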